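/- Let G be a linear k-uniform hypergraph on n vertices and λ = ⌈log n⌉. Then G contains a k-partite subhypergraph H with parts X_1, ..., X_k such that e(H) ≥ e(G)·k!/(kλ)^k and for each i, every vertex w ∈ X_i has degree at most 2λ^k · e(H)/|X_i|. -/

import Mathlib

set_option linter.unusedSectionVars false
set_option maxHeartbeats 1000000
open Finset

theorem count_ext {V : Type*} [Fintype V] [DecidableEq V] (k : ℕ) (e : Finset V)
    (he : e.card = k) :
    (Finset.univ.filter (fun f : V → Fin k =>
        ∀ i, (e.filter (fun v => f v = i)).card = 1)).card
      = k.factorial * k ^ (Fintype.card V - k) := by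
  classical
  -- condition iff restriction bijective
  have hiff : ∀ f : V → Fin k,
      (∀ i, (e.filter (fun v => f v = i)).card = 1) ↔
        Function.Bijective (fun v : {x // x ∈ e} => f v) := by
    intro f
    constructor
    · intro h
      constructor
      · rintro ⟨a, ha⟩ ⟨b, hb⟩ hab
        simp only at hab
        have h1 := h (f a)
        have ha' : a ∈ e.filter (fun v => f v = f a) := by simp [ha]
        have hb' : b ∈ e.filter (fun v => f v = f a) := by simp [hb, hab]
        exact Subtype.ext (Finset.card_le_one.mp h1.le a ha' b hb')
      · intro i
        have h1 := h i
        obtain ⟨v, hv⟩ := Finset.card_pos.mp (h1 ▸ Nat.one_pos)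
        simp only [Finset.mem_filter] at hv
        exact ⟨⟨v, hv.1⟩, hv.2⟩
    · intro hbij i
      obtain ⟨⟨v, hve⟩, hfv⟩ := hbij.2 i
      simp only at hfv
      rw [Finset.card_eq_one]
      refine ⟨v, Finset.eq_singleton_iff_unique_mem.mpr ⟨by simp [hve, hfv], ?_⟩⟩
      intro u hu
      simp only [Finset.mem_filter] at hu
      have := hbij.1 (a₁ := ⟨u, hu.1⟩) (a₂ := ⟨v, hve⟩) (by simp [hu.2, hfv])
      exact congrArg Subtype.val this
  rw [Finset.filter_congr (fun f _ => by rw [hiff f])]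
  rw [← Fintype.card_subtype]
  -- now count the subtype
  have hcompl : Fintype.card {x // ¬ x ∈ e} = Fintype.card V - k := by
    rw [Fintype.card_subtype_compl]
    congr 1
    rw [Fintype.card_coe]; exact he
  have hcarde : Fintype.card {x // x ∈ e} = Fintype.card (Fin k) := by
    rw [Fintype.card_coe, he, Fintype.card_fin]
  -- equiv chain
  let Φ := Equiv.piEquivPiSubtypeProd (fun x => x ∈ e) (fun _ => Fin k)
  have key : ∀ f : V → Fin k,
      Function.Bijective (fun v : {x // x ∈ e} => f v) ↔ Function.Bijective (Φ f).1 := by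
    intro f; rfl
  let Ψ : {f : V → Fin k // Function.Bijective fun v : {x // x ∈ e} => f v} ≃
      {g : {x // x ∈ e} → Fin k // Function.Bijective g} × ({x // ¬ x ∈ e} → Fin k) :=
    { toFun := fun f => (⟨(Φ f.1).1, (key f.1).mp f.2⟩, (Φ f.1).2)
      invFun := fun z => ⟨Φ.symm (z.1.1, z.2), by
        rw [key]
        simpa using z.1.2⟩
      left_inv := fun f => by simp
      right_inv := fun z => by simp }
  rw [Fintype.card_congr Ψ, Fintype.card_prod]
  congr 1
  · let Θ : {g : {x // x ∈ e} → Fin k // Function.Bijective g} ≃ ({x // x ∈ e} ≃ Fin k) :=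
      { toFun := fun g => Equiv.ofBijective g.1 g.2
        invFun := fun E => ⟨E, E.bijective⟩
        left_inv := fun g => rfl
        right_inv := fun E => by ext x; rfl }
    rw [Fintype.card_congr Θ]
    obtain ⟨eqv⟩ := Fintype.card_eq.mp hcarde
    rw [Fintype.card_equiv eqv, hcarde, Fintype.card_fin]
  · rw [Fintype.card_fun, Fintype.card_fin, hcompl]


theorem exists_f {V : Type*} [Fintype V] [DecidableEq V] (k : ℕ) (E : Finset (Finset V))
    (hunif : ∀ e ∈ E, e.card = k) (hk : 1 ≤ k) :
    ∃ f : V → Fin k,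
      E.card * (k.factorial * k ^ (Fintype.card V - k)) ≤
        k ^ (Fintype.card V) *
          (E.filter (fun e => ∀ i, (e.filter (fun v => f v = i)).card = 1)).card := by
  classical
  have : Nonempty (Fin k) := ⟨⟨0, hk⟩⟩
  have hne : (Finset.univ : Finset (V → Fin k)).Nonempty := Finset.univ_nonempty
  have hcardF : (Finset.univ : Finset (V → Fin k)).card = k ^ (Fintype.card V) := by
    rw [Finset.card_univ, Fintype.card_fun, Fintype.card_fin]
  have hsum : ∑ f : V → Fin k,
      (E.filter (fun e => ∀ i, (e.filter (fun v => f v = i)).card = 1)).card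
      = E.card * (k.factorial * k ^ (Fintype.card V - k)) := by
    have : ∀ f : V → Fin k,
        (E.filter (fun e => ∀ i, (e.filter (fun v => f v = i)).card = 1)).card
        = ∑ e ∈ E, if (∀ i, (e.filter (fun v => f v = i)).card = 1) then 1 else 0 :=
      fun f => Finset.card_filter _ _
    simp_rw [this]
    rw [Finset.sum_comm]
    have : ∀ e ∈ E, (∑ f : V → Fin k,
        if (∀ i, (e.filter (fun v => f v = i)).card = 1) then 1 else 0)
        = k.factorial * k ^ (Fintype.card V - k) := by
      intro e he
      rw [← Finset.card_filter]
      exact count_ext k e (hunif e he)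
    rw [Finset.sum_congr rfl this, Finset.sum_const, smul_eq_mul]
  obtain ⟨f, -, hf⟩ := Finset.exists_le_of_sum_le (f := fun _ : V → Fin k =>
      E.card * (k.factorial * k ^ (Fintype.card V - k)))
    (g := fun f : V → Fin k => k ^ (Fintype.card V) *
      (E.filter (fun e => ∀ i, (e.filter (fun v => f v = i)).card = 1)).card)
    hne (by
      rw [Finset.sum_const, smul_eq_mul, ← Finset.mul_sum, hsum, hcardF])
  exact ⟨f, hf⟩

theorem deg_lt {V : Type*} [Fintype V] [DecidableEq V] (k : ℕ) (hk : 1 ≤ k)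
    (hn : 2 ≤ Fintype.card V) (v : V) (S : Finset (Finset V))
    (hmem : ∀ e ∈ S, v ∈ e ∧ e.card = k)
    (hlin : ∀ e ∈ S, ∀ f ∈ S, e ≠ f → (e ∩ f).card ≤ 1) :
    S.card < Fintype.card V := by
  classical
  rcases eq_or_lt_of_le hk with hk1 | hk2
  · -- k = 1 : every edge is {v}
    have : S ⊆ {{v}} := by
      intro e heS
      obtain ⟨hv, hc⟩ := hmem e heS
      rw [Finset.mem_singleton]
      rw [← hk1] at hc
      obtain ⟨a, ha⟩ := Finset.card_eq_one.mp hc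
      rw [ha]; rw [ha, Finset.mem_singleton] at hv; rw [hv]
    calc S.card ≤ 1 := by simpa using Finset.card_le_card this
    _ < Fintype.card V := by omega
  · -- k ≥ 2
    have hdisj : ∀ e ∈ S, ∀ f ∈ S, e ≠ f → Disjoint (e.erase v) (f.erase v) := by
      intro e heS f hfS hef
      rw [Finset.disjoint_left]
      intro x hxe hxf
      have h1 := hlin e heS f hfS hef
      have hxv : x ≠ v := (Finset.mem_erase.mp hxe).1
      have hx : x ∈ e ∩ f := Finset.mem_inter.mpr
        ⟨Finset.mem_of_mem_erase hxe, Finset.mem_of_mem_erase hxf⟩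
      have hv' : v ∈ e ∩ f := Finset.mem_inter.mpr ⟨(hmem e heS).1, (hmem f hfS).1⟩
      exact hxv (Finset.card_le_one.mp h1 x hx v hv')
    have hcardB : (S.biUnion (fun e => e.erase v)).card = ∑ e ∈ S, (e.erase v).card :=
      Finset.card_biUnion hdisj
    have hBsub : S.biUnion (fun e => e.erase v) ⊆ Finset.univ.erase v := by
      intro x hx
      obtain ⟨e, -, hxe⟩ := Finset.mem_biUnion.mp hx
      exact Finset.mem_erase.mpr ⟨(Finset.mem_erase.mp hxe).1, Finset.mem_univ x⟩
    have hle : ∑ e ∈ S, (e.erase v).card ≤ Fintype.card V - 1 := by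
      rw [← hcardB]
      calc (S.biUnion (fun e => e.erase v)).card ≤ (Finset.univ.erase v).card :=
            Finset.card_le_card hBsub
        _ = Fintype.card V - 1 := by rw [Finset.card_erase_of_mem (Finset.mem_univ v),
            Finset.card_univ]
    have hsum : ∑ e ∈ S, (e.erase v).card = S.card * (k - 1) := by
      rw [Finset.sum_congr rfl (fun e heS => ?_), Finset.sum_const, smul_eq_mul]
      rw [Finset.card_erase_of_mem (hmem e heS).1, (hmem e heS).2]
    have : S.card ≤ S.card * (k - 1) := Nat.le_mul_of_pos_right _ (by omega)
    omega

section Defs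
variable {V : Type*} [Fintype V] [DecidableEq V]

/-- transversal w.r.t. the colouring `f` -/
def trv (k : ℕ) (f : V → Fin k) (e : Finset V) : Prop :=
  ∀ i, (e.filter (fun v => f v = i)).card = 1

instance (k : ℕ) (f : V → Fin k) : DecidablePred (trv k f) := fun _ => by
  unfold trv; infer_instance

/-- transversal edges -/
def Et (k : ℕ) (E : Finset (Finset V)) (f : V → Fin k) : Finset (Finset V) :=
  E.filter (trv k f)

/-- degree in the transversal subhypergraph -/
def Dg (k : ℕ) (E : Finset (Finset V)) (f : V → Fin k) (v : V) : ℕ :=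
  ((Et k E f).filter (fun e => v ∈ e)).card

/-- degree class -/
noncomputable def Cl (k : ℕ) (E : Finset (Finset V)) (f : V → Fin k) (v : V) : ℕ :=
  ⌊Real.log (Dg k E f v)⌋₊

open Classical in
/-- the parts -/
noncomputable def XX (k L : ℕ) (E : Finset (Finset V)) (f : V → Fin k)
    (c : Fin k → Fin L) (i : Fin k) : Finset V :=
  Finset.univ.filter (fun v => f v = i ∧ 1 ≤ Dg k E f v ∧ Cl k E f v = (c i : ℕ))

/-- the candidate subhypergraphs -/
noncomputable def HH (k L : ℕ) (E : Finset (Finset V)) (f : V → Fin k)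
    (c : Fin k → Fin L) : Finset (Finset V) :=
  E.filter (fun e => ∀ i, (e ∩ XX k L E f c i).card = 1)

variable (k L : ℕ) (E : Finset (Finset V)) (f : V → Fin k)

lemma mem_XX {c : Fin k → Fin L} {i : Fin k} {v : V} :
    v ∈ XX k L E f c i ↔ f v = i ∧ 1 ≤ Dg k E f v ∧ Cl k E f v = (c i : ℕ) := by
  rw [XX]; simp

lemma mem_Et {e : Finset V} : e ∈ Et k E f ↔ e ∈ E ∧ trv k f e := by
  rw [Et, Finset.mem_filter]

lemma one_le_Dg {e : Finset V} (he : e ∈ Et k E f) {v : V} (hv : v ∈ e) :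
    1 ≤ Dg k E f v := by
  rw [Dg]
  exact Finset.card_pos.mpr ⟨e, Finset.mem_filter.mpr ⟨he, hv⟩⟩

/-- membership in `HH` characterisation -/
lemma mem_HH_iff {c : Fin k → Fin L} {e : Finset V} (heE : e ∈ E) (hek : e.card = k) :
    e ∈ HH k L E f c ↔
      (trv k f e ∧ ∀ v ∈ e, 1 ≤ Dg k E f v ∧ Cl k E f v = (c (f v) : ℕ)) := by
  classical
  have hXfilt : ∀ i, e ∩ XX k L E f c i =
      e.filter (fun v => f v = i ∧ 1 ≤ Dg k E f v ∧ Cl k E f v = (c i : ℕ)) := by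
    intro i
    ext v
    simp only [Finset.mem_inter, Finset.mem_filter, mem_XX]
  rw [HH, Finset.mem_filter]
  constructor
  · rintro ⟨-, hall⟩
    have hQ : ∀ v ∈ e, 1 ≤ Dg k E f v ∧ Cl k E f v = (c (f v) : ℕ) := by
      have hfib : (e.filter (fun v => 1 ≤ Dg k E f v ∧ Cl k E f v = (c (f v) : ℕ))).card
          = ∑ i : Fin k, (e ∩ XX k L E f c i).card := by
        rw [Finset.card_eq_sum_card_fiberwise
          (f := f) (t := Finset.univ) (fun x _ => Finset.mem_univ _)]
        refine Finset.sum_congr rfl fun i _ => ?_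
        congr 1
        rw [hXfilt i, Finset.filter_filter]
        ext v
        simp only [Finset.mem_filter]
        constructor
        · rintro ⟨hv, ⟨h1, h2⟩, h3⟩
          exact ⟨hv, h3, h1, by rw [← h3]; exact h2⟩
        · rintro ⟨hv, h3, h1, h2⟩
          exact ⟨hv, ⟨h1, by rw [h3]; exact h2⟩, h3⟩
      have hcard : (e.filter (fun v => 1 ≤ Dg k E f v ∧ Cl k E f v = (c (f v) : ℕ))).card
          = k := by
        rw [hfib]
        simp [hall]
      have := Finset.eq_of_subset_of_card_le (Finset.filter_subset _ e)
        (by rw [hcard, hek])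
      intro v hv
      have := (Finset.filter_eq_self).mp this v hv
      exact this
    refine ⟨fun i => ?_, hQ⟩
    rw [← hall i, hXfilt i]
    congr 1
    ext v
    simp only [Finset.mem_filter]
    constructor
    · rintro ⟨hv, hfv⟩
      obtain ⟨h1, h2⟩ := hQ v hv
      exact ⟨hv, hfv, h1, by rw [← hfv]; exact h2⟩
    · rintro ⟨hv, hfv, -⟩
      exact ⟨hv, hfv⟩
  · rintro ⟨htrv, hQ⟩
    refine ⟨heE, fun i => ?_⟩
    rw [hXfilt i]
    rw [show e.filter (fun v => f v = i ∧ 1 ≤ Dg k E f v ∧ Cl k E f v = (c i : ℕ))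
        = e.filter (fun v => f v = i) from ?_]
    · exact htrv i
    · ext v
      simp only [Finset.mem_filter]
      constructor
      · rintro ⟨hv, hfv, -⟩; exact ⟨hv, hfv⟩
      · rintro ⟨hv, hfv⟩
        obtain ⟨h1, h2⟩ := hQ v hv
        exact ⟨hv, hfv, h1, by rw [← hfv]; exact h2⟩

/-- a transversal edge has a witness function picking its vertex in each fibre -/
lemma exists_witness {e : Finset V} (htrv : trv k f e) :
    ∃ w : Fin k → V, (∀ j, w j ∈ e ∧ f (w j) = j) ∧ ∀ v ∈ e, v = w (f v) := by
  have hne : ∀ j, (e.filter (fun v => f v = j)).Nonempty := fun j =>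
    Finset.card_pos.mp (by rw [htrv j]; norm_num)
  refine ⟨fun j => (hne j).choose, fun j => ?_, fun v hv => ?_⟩
  · have := (hne j).choose_spec
    rw [Finset.mem_filter] at this
    exact this
  · have h1 : v ∈ e.filter (fun u => f u = f v) := Finset.mem_filter.mpr ⟨hv, rfl⟩
    have h2 := (hne (f v)).choose_spec
    exact Finset.card_le_one.mp (htrv (f v)).le v h1 _ h2


lemma exists_cw (hClt : ∀ v, 1 ≤ Dg k E f v → Cl k E f v < L)
    {e : Finset V} (heE : e ∈ E) (hek : e.card = k) (htrv : trv k f e) :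
    ∃ cw : Fin k → Fin L,
      (∀ c, (e ∈ HH k L E f c ↔ c = cw)) ∧
      (∀ c i, (e ∩ XX k L E f c i).card = if cw i = c i then 1 else 0) := by
  classical
  obtain ⟨w, hw, huniq⟩ := exists_witness k f htrv
  have hEt' : e ∈ Et k E f := (mem_Et k E f).mpr ⟨heE, htrv⟩
  have hD1 : ∀ v ∈ e, 1 ≤ Dg k E f v := fun v hv => one_le_Dg k E f hEt' hv
  refine ⟨fun j => ⟨Cl k E f (w j), hClt _ (hD1 (w j) (hw j).1)⟩, ?_, ?_⟩
  · intro c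
    rw [mem_HH_iff k L E f heE hek]
    constructor
    · rintro ⟨-, hQ⟩
      funext j
      have := (hQ (w j) (hw j).1).2
      rw [(hw j).2] at this
      exact Fin.ext (by simp [← this])
    · rintro rfl
      refine ⟨htrv, fun v hv => ⟨hD1 v hv, ?_⟩⟩
      simp only
      rw [← huniq v hv]
  · intro c i
    by_cases hCi : Cl k E f (w i) = (c i : ℕ)
    · rw [if_pos (Fin.ext (by simpa using hCi))]
      rw [show e ∩ XX k L E f c i = {w i} from ?_, Finset.card_singleton]
      ext v
      simp only [Finset.mem_inter, mem_XX, Finset.mem_singleton]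
      constructor
      · rintro ⟨hv, hfv, -, -⟩
        rw [huniq v hv, hfv]
      · rintro rfl
        exact ⟨(hw i).1, (hw i).2, hD1 _ (hw i).1, hCi⟩
    · rw [if_neg (fun h => hCi (by simpa using Fin.ext_iff.mp h))]
      rw [show e ∩ XX k L E f c i = ∅ from ?_, Finset.card_empty]
      ext v
      simp only [Finset.mem_inter, mem_XX, Finset.notMem_empty, iff_false, not_and]
      intro hv hfv h1 h2
      apply hCi
      have hv' : v = w i := by rw [huniq v hv, hfv]
      rw [← hv']
      exact h2

lemma card_HH (c : Fin k → Fin L) :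
    (HH k L E f c).card = ∑ e ∈ E, if e ∈ HH k L E f c then 1 else 0 := by
  classical
  have hsub : HH k L E f c ⊆ E := by rw [HH]; exact Finset.filter_subset _ _
  rw [← Finset.card_filter, Finset.filter_mem_eq_inter, Finset.inter_eq_right.mpr hsub]

lemma id1 (hClt : ∀ v, 1 ≤ Dg k E f v → Cl k E f v < L)
    (hunif : ∀ e ∈ E, e.card = k) :
    ∑ c : Fin k → Fin L, (HH k L E f c).card = (Et k E f).card := by
  classical
  simp_rw [card_HH k L E f]
  rw [Finset.sum_comm, Et, Finset.card_filter]
  refine Finset.sum_congr rfl fun e heE => ?_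
  by_cases htrv : trv k f e
  · obtain ⟨cw, hcw, -⟩ := exists_cw k L E f hClt heE (hunif e heE) htrv
    rw [if_pos htrv]
    calc ∑ c : Fin k → Fin L, (if e ∈ HH k L E f c then 1 else 0)
        = ∑ c : Fin k → Fin L, (if c = cw then 1 else 0) :=
          Finset.sum_congr rfl fun c _ => by simp only [hcw c]
      _ = 1 := by simp
  · rw [if_neg htrv]
    refine Finset.sum_eq_zero fun c _ => ?_
    rw [if_neg]
    intro hmem
    exact htrv ((mem_HH_iff k L E f heE (hunif e heE)).mp hmem).1

lemma id2 (hClt : ∀ v, 1 ≤ Dg k E f v → Cl k E f v < L)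
    (hunif : ∀ e ∈ E, e.card = k) (c : Fin k → Fin L) (i : Fin k) :
    ∑ c' ∈ Finset.univ.filter (fun c' : Fin k → Fin L => c' i = c i),
        (HH k L E f c').card
      = ∑ v ∈ XX k L E f c i, Dg k E f v := by
  classical
  simp_rw [card_HH k L E f]
  rw [Finset.sum_comm]
  have h2 : ∀ v, Dg k E f v = ∑ e ∈ E, if trv k f e ∧ v ∈ e then 1 else 0 := by
    intro v
    rw [Dg, Et, Finset.filter_filter, Finset.card_filter]
  have h2' : ∑ v ∈ XX k L E f c i, Dg k E f v
      = ∑ e ∈ E, ∑ v ∈ XX k L E f c i, (if trv k f e ∧ v ∈ e then 1 else 0) := by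
    rw [← Finset.sum_comm]
    exact Finset.sum_congr rfl fun v _ => h2 v
  rw [h2']
  refine Finset.sum_congr rfl fun e heE => ?_
  by_cases htrv : trv k f e
  · obtain ⟨cw, hcw, hcnt⟩ := exists_cw k L E f hClt heE (hunif e heE) htrv
    calc ∑ c' ∈ Finset.univ.filter (fun c' : Fin k → Fin L => c' i = c i),
          (if e ∈ HH k L E f c' then 1 else 0)
        = ∑ c' ∈ Finset.univ.filter (fun c' : Fin k → Fin L => c' i = c i),
          (if c' = cw then 1 else 0) :=
          Finset.sum_congr rfl fun c' _ => by simp only [hcw c']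
      _ = if cw ∈ Finset.univ.filter (fun c' : Fin k → Fin L => c' i = c i)
            then 1 else 0 := Finset.sum_ite_eq' _ cw (fun _ => 1)
      _ = if cw i = c i then 1 else 0 := by simp
      _ = (e ∩ XX k L E f c i).card := (hcnt c i).symm
      _ = ∑ v ∈ XX k L E f c i, (if trv k f e ∧ v ∈ e then 1 else 0) := by
          simp only [htrv, true_and]
          rw [Finset.inter_comm, ← Finset.card_filter, Finset.filter_mem_eq_inter,
            Finset.inter_comm]
  · have hl : ∑ c' ∈ Finset.univ.filter (fun c' : Fin k → Fin L => c' i = c i),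
        (if e ∈ HH k L E f c' then 1 else 0) = 0 := by
      refine Finset.sum_eq_zero fun c' _ => ?_
      rw [if_neg]
      intro hmem
      exact htrv ((mem_HH_iff k L E f heE (hunif e heE)).mp hmem).1
    have hr : ∑ v ∈ XX k L E f c i, (if trv k f e ∧ v ∈ e then 1 else 0) = 0 :=
      Finset.sum_eq_zero fun v _ => by rw [if_neg (fun h => htrv h.1)]
    rw [hl, hr]

lemma cardA_le (c : Fin k → Fin L) (i : Fin k) :
    (Finset.univ.filter (fun c' : Fin k → Fin L => c' i = c i)).card ≤ L ^ (k - 1) := by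
  classical
  have hinj : Set.InjOn (fun c' : Fin k → Fin L => (fun j : {j : Fin k // j ≠ i} => c' j.1))
      (Finset.univ.filter (fun c' : Fin k → Fin L => c' i = c i)) := by
    intro c1 h1 c2 h2 heq
    simp only [Finset.coe_filter, Set.mem_setOf_eq] at h1 h2
    funext j
    by_cases hj : j = i
    · rw [hj, h1.2, h2.2]
    · exact congrFun heq ⟨j, hj⟩
  have hcard : Fintype.card {j : Fin k // j ≠ i} = k - 1 := by
    rw [Fintype.card_subtype_compl, Fintype.card_subtype_eq, Fintype.card_fin]
  have := Finset.card_le_card_of_injOn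
    (t := (Finset.univ : Finset ({j : Fin k // j ≠ i} → Fin L)))
    (fun c' : Fin k → Fin L => (fun j : {j : Fin k // j ≠ i} => c' j.1))
    (fun _ _ => Finset.mem_univ _) hinj
  refine this.trans ?_
  rw [Finset.card_univ, Fintype.card_fun, Fintype.card_fin, hcard]

end Defs



theorem main_case {V : Type*} [Fintype V] [DecidableEq V] (k L : ℕ)
    (E : Finset (Finset V))
    (hunif : ∀ e ∈ E, e.card = k)
    (hlinear : ∀ e ∈ E, ∀ f ∈ E, e ≠ f → (e ∩ f).card ≤ 1)
    (hk : 1 ≤ k) (hL : 1 ≤ L) (hn : 2 ≤ Fintype.card V)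
    (hexp : (Fintype.card V : ℝ) ≤ Real.exp L) (hE : E.Nonempty) :
    ∃ X : Fin k → Finset V, (∀ i j, i ≠ j → Disjoint (X i) (X j)) ∧
      ∀ H : Finset (Finset V), H = E.filter (fun e => ∀ i, (e ∩ X i).card = 1) →
        (E.card : ℝ) * (k.factorial : ℝ) / ((k : ℝ) * (L : ℝ)) ^ k ≤ H.card ∧
        ∀ i, ∀ w ∈ X i, ((H.filter (fun e => w ∈ e)).card : ℝ) ≤
          2 * (L : ℝ) ^ k * H.card / (X i).card := by
  classical
  obtain ⟨f, hf⟩ := exists_f k E hunif hk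
  have hfilt : E.filter (fun e => ∀ i, (e.filter (fun v => f v = i)).card = 1)
      = Et k E f := by
    ext e
    simp only [Finset.mem_filter, mem_Et, trv]
  rw [hfilt] at hf
  -- degree bound
  have hDlt : ∀ v, Dg k E f v < Fintype.card V := by
    intro v
    rw [Dg]
    apply deg_lt k hk hn v
    · intro e he'
      rw [Finset.mem_filter] at he'
      obtain ⟨heEt, hv⟩ := he'
      exact ⟨hv, hunif e ((mem_Et k E f).mp heEt).1⟩
    · intro e he' g hg' hne
      rw [Finset.mem_filter] at he' hg'
      exact hlinear e ((mem_Et k E f).mp he'.1).1 g ((mem_Et k E f).mp hg'.1).1 hne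
  have hClt : ∀ v, 1 ≤ Dg k E f v → Cl k E f v < L := by
    intro v h1
    rw [Cl, Nat.floor_lt (Real.log_nonneg (by exact_mod_cast h1))]
    rw [← Real.log_exp (L : ℝ)]
    apply Real.log_lt_log (by exact_mod_cast h1)
    exact lt_of_lt_of_le (by exact_mod_cast hDlt v) hexp
  -- choose the maximizing colour profile
  have : Nonempty (Fin L) := ⟨⟨0, hL⟩⟩
  obtain ⟨c, -, hc⟩ := Finset.exists_max_image Finset.univ
    (fun c : Fin k → Fin L => (HH k L E f c).card) Finset.univ_nonempty
  refine ⟨XX k L E f c, ?_, ?_⟩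
  · intro i j hij
    rw [Finset.disjoint_left]
    intro v hvi hvj
    rw [mem_XX] at hvi hvj
    exact hij (hvi.1 ▸ hvj.1 ▸ rfl)
  intro H hH
  have hHH : H = HH k L E f c := by rw [hH, HH]
  have hEtle : (Et k E f).card ≤ L ^ k * (HH k L E f c).card := by
    rw [← id1 k L E f hClt hunif]
    calc ∑ c' : Fin k → Fin L, (HH k L E f c').card
        ≤ ∑ _c' : Fin k → Fin L, (HH k L E f c).card :=
          Finset.sum_le_sum fun c' _ => hc c' (Finset.mem_univ c')
      _ = L ^ k * (HH k L E f c).card := by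
          rw [Finset.sum_const, Finset.card_univ, Fintype.card_fun, Fintype.card_fin,
            Fintype.card_fin, smul_eq_mul]
  constructor
  · -- edge count bound
    obtain ⟨e0, he0⟩ := hE
    have hnk : k ≤ Fintype.card V := by
      rw [← hunif e0 he0]
      exact Finset.card_le_univ e0
    have hk_pow : k ^ (Fintype.card V) = k ^ (Fintype.card V - k) * k ^ k := by
      rw [← pow_add, Nat.sub_add_cancel hnk]
    have h3 : E.card * k.factorial ≤ k ^ k * L ^ k * (HH k L E f c).card := by
      have h4 : k ^ (Fintype.card V - k) * (E.card * k.factorial)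
          ≤ k ^ (Fintype.card V - k) * (k ^ k * L ^ k * (HH k L E f c).card) := by
        calc k ^ (Fintype.card V - k) * (E.card * k.factorial)
            = E.card * (k.factorial * k ^ (Fintype.card V - k)) := by ring
          _ ≤ k ^ (Fintype.card V) * (Et k E f).card := hf
          _ ≤ k ^ (Fintype.card V) * (L ^ k * (HH k L E f c).card) :=
              Nat.mul_le_mul_left _ hEtle
          _ = k ^ (Fintype.card V - k) * (k ^ k * L ^ k * (HH k L E f c).card) := by
              rw [hk_pow]; ring
      exact Nat.le_of_mul_le_mul_left h4 (Nat.pow_pos hk)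
    have hkL : (0 : ℝ) < ((k : ℝ) * (L : ℝ)) ^ k := by
      apply pow_pos
      have h1 : (0:ℝ) < k := by exact_mod_cast hk
      have h2 : (0:ℝ) < L := by exact_mod_cast hL
      positivity
    rw [div_le_iff₀ hkL, hHH]
    calc (E.card : ℝ) * (k.factorial : ℝ)
        ≤ ((k : ℝ) ^ k * (L : ℝ) ^ k) * ((HH k L E f c).card : ℝ) := by
          exact_mod_cast h3
      _ = ((HH k L E f c).card : ℝ) * ((k : ℝ) * (L : ℝ)) ^ k := by
          rw [mul_pow]; ring
  · -- balance
    intro i w hw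
    have hw' := hw
    rw [mem_XX] at hw'
    obtain ⟨hfw, hDw1, hCw⟩ := hw'
    have hdegH : (H.filter (fun e => w ∈ e)).card ≤ Dg k E f w := by
      rw [Dg]
      apply Finset.card_le_card
      intro e he'
      rw [Finset.mem_filter] at he' ⊢
      refine ⟨?_, he'.2⟩
      have hmem := he'.1
      rw [hHH] at hmem
      have heE : e ∈ E := by
        rw [HH] at hmem
        exact (Finset.mem_filter.mp hmem).1
      exact (mem_Et k E f).mpr ⟨heE, ((mem_HH_iff k L E f heE (hunif e heE)).mp hmem).1⟩
    have hDgpos : (0:ℝ) < (Dg k E f w : ℝ) := by exact_mod_cast hDw1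
    have hDup : (Dg k E f w : ℝ) < Real.exp ((c i : ℕ) + 1) := by
      have hlog : Real.log (Dg k E f w) < (c i : ℕ) + 1 := by
        have h5 : Real.log (Dg k E f w) < ⌊Real.log (Dg k E f w)⌋₊ + 1 :=
          Nat.lt_floor_add_one _
        have h6 : (⌊Real.log (Dg k E f w)⌋₊ : ℝ) = ((c i : ℕ) : ℝ) := by
          exact_mod_cast congrArg (Nat.cast (R := ℝ)) hCw
        linarith
      calc (Dg k E f w : ℝ) = Real.exp (Real.log (Dg k E f w)) :=
            (Real.exp_log hDgpos).symm
        _ < Real.exp ((c i : ℕ) + 1) := Real.exp_lt_exp.mpr hlog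
    have hkey : (Dg k E f w : ℝ) ≤ 2 * (L : ℝ) * Real.exp (c i : ℕ) := by
      rcases eq_or_lt_of_le hL with hL1 | hL2
      · have hci0 : (c i : ℕ) = 0 := by
          have h20 := (c i).isLt
          omega
        have hci : ((c i : ℕ) : ℝ) = 0 := by exact_mod_cast hci0
        have h3' : (Dg k E f w : ℝ) < 3 := by
          have h7 := hDup
          rw [hci] at h7
          have h8 : Real.exp (0 + 1) < 3 := by
            rw [zero_add]
            exact lt_trans Real.exp_one_lt_d9 (by norm_num)
          linarith
        have h9 : Dg k E f w ≤ 2 := by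
          have : Dg k E f w < 3 := by exact_mod_cast h3'
          omega
        rw [hci, ← hL1, Real.exp_zero]
        push_cast
        have : (Dg k E f w : ℝ) ≤ 2 := by exact_mod_cast h9
        linarith
      · calc (Dg k E f w : ℝ) ≤ Real.exp ((c i : ℕ) + 1) := hDup.le
          _ = Real.exp 1 * Real.exp (c i : ℕ) := by
              rw [← Real.exp_add]; ring_nf
          _ ≤ 2 * (L : ℝ) * Real.exp (c i : ℕ) := by
              apply mul_le_mul_of_nonneg_right _ (Real.exp_nonneg _)
              have h10 : Real.exp 1 < 4 := lt_trans Real.exp_one_lt_d9 (by norm_num)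
              have h11 : (2:ℝ) ≤ (L:ℝ) := by exact_mod_cast hL2
              linarith
    have hXlow : ((XX k L E f c i).card : ℝ) * Real.exp (c i : ℕ)
        ≤ (L : ℝ) ^ (k - 1) * ((HH k L E f c).card : ℝ) := by
      have hsum : ∑ v ∈ XX k L E f c i, Dg k E f v
          ≤ L ^ (k - 1) * (HH k L E f c).card := by
        rw [← id2 k L E f hClt hunif c i]
        calc ∑ c' ∈ Finset.univ.filter (fun c' : Fin k → Fin L => c' i = c i),
              (HH k L E f c').card
            ≤ ∑ _c' ∈ Finset.univ.filter (fun c' : Fin k → Fin L => c' i = c i),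
              (HH k L E f c).card :=
              Finset.sum_le_sum fun c' _ => hc c' (Finset.mem_univ c')
          _ = (Finset.univ.filter (fun c' : Fin k → Fin L => c' i = c i)).card
                * (HH k L E f c).card := by rw [Finset.sum_const, smul_eq_mul]
          _ ≤ L ^ (k - 1) * (HH k L E f c).card :=
              Nat.mul_le_mul_right _ (cardA_le k L c i)
      have hlow : ∀ v ∈ XX k L E f c i, Real.exp (c i : ℕ) ≤ (Dg k E f v : ℝ) := by
        intro v hv
        rw [mem_XX] at hv
        obtain ⟨-, h1, h2⟩ := hv
        have h12 : ((c i : ℕ) : ℝ) ≤ Real.log (Dg k E f v) := by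
          rw [← h2]
          exact Nat.floor_le (Real.log_nonneg (by exact_mod_cast h1))
        calc Real.exp (c i : ℕ) ≤ Real.exp (Real.log (Dg k E f v)) :=
              Real.exp_le_exp.mpr h12
          _ = (Dg k E f v : ℝ) := Real.exp_log (by exact_mod_cast h1)
      calc ((XX k L E f c i).card : ℝ) * Real.exp (c i : ℕ)
          = ∑ _v ∈ XX k L E f c i, Real.exp (c i : ℕ) := by
            rw [Finset.sum_const, nsmul_eq_mul]
        _ ≤ ∑ v ∈ XX k L E f c i, (Dg k E f v : ℝ) := Finset.sum_le_sum hlow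
        _ = ((∑ v ∈ XX k L E f c i, Dg k E f v : ℕ) : ℝ) := by push_cast; rfl
        _ ≤ (L : ℝ) ^ (k - 1) * ((HH k L E f c).card : ℝ) := by exact_mod_cast hsum
    have hXpos : (0:ℝ) < ((XX k L E f c i).card : ℝ) := by
      have : 0 < (XX k L E f c i).card := Finset.card_pos.mpr ⟨w, hw⟩
      exact_mod_cast this
    rw [hHH, le_div_iff₀ hXpos]
    have hLpow : (L : ℝ) * (L : ℝ) ^ (k - 1) = (L : ℝ) ^ k := by
      rw [← pow_succ']
      congr 1
      omega
    calc (((HH k L E f c).filter (fun e => w ∈ e)).card : ℝ)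
          * ((XX k L E f c i).card : ℝ)
        ≤ (Dg k E f w : ℝ) * ((XX k L E f c i).card : ℝ) := by
          apply mul_le_mul_of_nonneg_right _ hXpos.le
          have := hdegH
          rw [hHH] at this
          exact_mod_cast this
      _ ≤ (2 * (L : ℝ) * Real.exp (c i : ℕ)) * ((XX k L E f c i).card : ℝ) :=
          mul_le_mul_of_nonneg_right hkey hXpos.le
      _ = 2 * (L : ℝ) * (((XX k L E f c i).card : ℝ) * Real.exp (c i : ℕ)) := by ring
      _ ≤ 2 * (L : ℝ) * ((L : ℝ) ^ (k - 1) * ((HH k L E f c).card : ℝ)) := by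
          apply mul_le_mul_of_nonneg_left hXlow
          have h2 : (0:ℝ) ≤ L := by positivity
          linarith
      _ = 2 * (L : ℝ) ^ k * ((HH k L E f c).card : ℝ) := by
          rw [← hLpow]; ring

/-- Regularization: a linear k-uniform hypergraph `G` on `n` vertices contains a k-partite
subhypergraph `H` (with parts `X 0, …, X (k-1)`) with `e(H) ≥ e(G)·k!/(kλ)^k` which is
`2λ^k`-balanced, where `λ = ⌈log n⌉`. -/
theorem stmt_12 {V : Type*} [Fintype V] [DecidableEq V] (k : ℕ)
    (E : Finset (Finset V))
    (hunif : ∀ e ∈ E, e.card = k)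
    (hlinear : ∀ e ∈ E, ∀ f ∈ E, e ≠ f → (e ∩ f).card ≤ 1) :
    ∃ X : Fin k → Finset V, (∀ i j, i ≠ j → Disjoint (X i) (X j)) ∧
      ∀ H : Finset (Finset V), H = E.filter (fun e => ∀ i, (e ∩ X i).card = 1) →
        (E.card : ℝ) * (k.factorial : ℝ) /
            ((k : ℝ) * (⌈Real.log (Fintype.card V)⌉₊ : ℝ)) ^ k ≤ H.card ∧
        ∀ i, ∀ w ∈ X i, ((H.filter (fun e => w ∈ e)).card : ℝ) ≤
          2 * (⌈Real.log (Fintype.card V)⌉₊ : ℝ) ^ k * H.card / (X i).card := by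
  classical
  by_cases hk : k = 0
  · subst hk
    refine ⟨fun _ => ∅, fun i j _ => Finset.disjoint_left.mpr (fun a ha => absurd ha (Finset.notMem_empty a)), ?_⟩
    intro H hH
    have hHE : H = E := by
      rw [hH]
      apply Finset.filter_true_of_mem
      intro e _
      intro i
      exact i.elim0
    constructor
    · rw [hHE]
      simp
    · intro i
      exact i.elim0
  by_cases hE0 : E = ∅
  · subst hE0
    refine ⟨fun _ => ∅, fun i j _ => Finset.disjoint_left.mpr (fun a ha => absurd ha (Finset.notMem_empty a)), ?_⟩
    intro H hH
    have hH0 : H = ∅ := by rw [hH]; exact Finset.filter_empty _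
    constructor
    · rw [hH0]
      simp
    · intro i w hw
      exact absurd hw (Finset.notMem_empty w)
  by_cases hL0 : ⌈Real.log (Fintype.card V)⌉₊ = 0
  · refine ⟨fun _ => ∅, fun i j _ => Finset.disjoint_left.mpr (fun a ha => absurd ha (Finset.notMem_empty a)), ?_⟩
    intro H hH
    have hH0 : H = ∅ := by
      rw [hH]
      apply Finset.filter_false_of_mem
      intro e _ hall
      have := hall ⟨0, Nat.pos_of_ne_zero hk⟩
      simp at this
    constructor
    · rw [hH0, hL0]
      rw [show ((0:ℕ):ℝ) = 0 from Nat.cast_zero, mul_zero, zero_pow hk, div_zero]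
      simp
    · intro i w hw
      exact absurd hw (Finset.notMem_empty w)
  · have hk1 : 1 ≤ k := Nat.one_le_iff_ne_zero.mpr hk
    have hL1 : 1 ≤ ⌈Real.log (Fintype.card V)⌉₊ := Nat.one_le_iff_ne_zero.mpr hL0
    have hn2 : 2 ≤ Fintype.card V := by
      by_contra h
      push_neg at h
      have h1 : (Fintype.card V : ℝ) ≤ 1 := by
        exact_mod_cast Nat.lt_succ_iff.mp h
      have h2 : Real.log (Fintype.card V) ≤ 0 :=
        Real.log_nonpos (by positivity) h1
      exact hL0 (Nat.ceil_eq_zero.mpr h2)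
    have hexp : (Fintype.card V : ℝ) ≤ Real.exp (⌈Real.log (Fintype.card V)⌉₊ : ℕ) := by
      have hpos : (0:ℝ) < (Fintype.card V : ℝ) := by
        have : 0 < Fintype.card V := by omega
        exact_mod_cast this
      calc (Fintype.card V : ℝ) = Real.exp (Real.log (Fintype.card V)) :=
            (Real.exp_log hpos).symm
        _ ≤ Real.exp (⌈Real.log (Fintype.card V)⌉₊ : ℕ) :=
            Real.exp_le_exp.mpr (Nat.le_ceil _)
    exact main_case k _ E hunif hlinear hk1 hL1 hn2 hexp
      (Finset.nonempty_iff_ne_empty.mpr hE0)
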